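/- arXiv:1312.3430 — 2 statements merged into one kernel-verified Lean document; each statement's English description precedes it below -/
import Mathlib

section
/- Let A ∈ X and let D be a set of elements each basic over A. Then d-closure over A restricted to D satisfies the exchange property: if c_1, c_2 ∈ D and c_1 ∈ cl^d(A ∪ {c_2}) \ A, then c_2 ∈ cl^d(A ∪ {c_1}). Hence (D, cl^d(A ∪ ·) ∩ D) is a pregeometry on D. -/
/-! Framework: an integer-valued dimension function on a countable structure `M`,
with automorphism group modelled by a group `G` acting on `M`. -/

/-- An invariant, nonnegative, monotone, submodular integer-valued dimension
function on the finite subsets of `M`, normalised by `d ∅ = 0`. -/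
structure DimFn (M G : Type*) [DecidableEq M] [Group G] [MulAction G M] where
  d : Finset M → ℤ
  invariant : ∀ (g : G) (X : Finset M), d (X.image (fun x => g • x)) = d X
  nonneg : ∀ X : Finset M, 0 ≤ d X
  mono : ∀ ⦃X Y : Finset M⦄, X ⊆ Y → d X ≤ d Y
  submodular : ∀ X Y : Finset M, d (X ∪ Y) ≤ d X + d Y - d (X ∩ Y)
  d_empty : d ∅ = 0

/-- `g` fixes the set `A` pointwise. -/
def Fixes {M : Type*} (G : Type*) [Group G] [MulAction G M] (g : G) (A : Set M) : Prop :=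
  ∀ a ∈ A, g • a = a

/-- The orbit of `a` under the pointwise stabiliser `Aut(M/A)` of `A` in `G`. -/
def orbOver {M : Type*} (G : Type*) [Group G] [MulAction G M] (a : M) (A : Set M) : Set M :=
  {b : M | ∃ g : G, Fixes G g A ∧ g • a = b}

namespace DimFn

variable {M G : Type*} [DecidableEq M] [Group G] [MulAction G M] (D : DimFn M G)

/-- Relative dimension `d(X/Z)` of a finite set over an arbitrary set:
the infimum of `d(X ∪ Y) - d(Y)` over finite `Y ⊆ Z`. -/
noncomputable def drel (X : Finset M) (Z : Set M) : ℤ :=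
  sInf {k : ℤ | ∃ Y : Finset M, ↑Y ⊆ Z ∧ k = D.d (X ∪ Y) - D.d Y}

/-- The `d`-closure `cl^d(Z) = {a : d(a/Z) = 0}`. -/
noncomputable def cld (Z : Set M) : Set M := {a : M | D.drel {a} Z = 0}

/-- Membership in the family `𝒳` of `d`-closures of finite subsets of `M`. -/
def IsClX (A : Set M) : Prop := ∃ X : Finset M, A = D.cld ↑X

/-- `d`-independence `X ⫝^d_B C` of a finite tuple `X` from `C` over `B`. -/
noncomputable def IndepF (X : Finset M) (B C : Set M) : Prop :=
  D.drel X (B ∪ C) = D.drel X B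

/-- `d`-independence `A ⫝^d_B C` for sets. -/
def Indep (A B C : Set M) : Prop := ∀ X : Finset M, ↑X ⊆ A → D.IndepF X B C

/-- `cl^d` subsumes definable closure: any element fixed by every automorphism
fixing `cl^d(X)` pointwise lies in `cl^d(X)`. -/
def SubsumesDcl : Prop :=
  ∀ (X : Finset M) (a : M),
    (∀ g : G, Fixes G g (D.cld ↑X) → g • a = a) → a ∈ D.cld ↑X

/-- Invariance of `⫝^d` under the group action. -/
def InvarianceP : Prop :=
  ∀ (g : G) (A B C : Set M), D.Indep A B C →
    D.Indep ((fun x => g • x) '' A) ((fun x => g • x) '' B) ((fun x => g • x) '' C)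

/-- Monotonicity of `⫝^d`. -/
def MonotonicityP : Prop :=
  ∀ A B C C' : Set M, D.Indep A B (C ∪ C') → D.Indep A B C ∧ D.Indep A (B ∪ C) C'

/-- Transitivity of `⫝^d`. -/
def TransitivityP : Prop :=
  ∀ A B C C' : Set M, D.Indep A B C → D.Indep A (B ∪ C) C' → D.Indep A B (C ∪ C')

/-- Symmetry of `⫝^d`. -/
def SymmetryP : Prop := ∀ A B C : Set M, D.Indep A B C → D.Indep C B A

/-- Compatibility of `⫝^d` with the closure `cl^d`:
`a ⫝_b C ↔ a ⫝_{cl(b)} C` and `a ⫝_B C ↔ cl(a,B) ⫝_B C`. -/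
def CompatibilityP : Prop :=
  (∀ (X b : Finset M) (C : Set M), D.IndepF X ↑b C ↔ D.IndepF X (D.cld ↑b) C) ∧
  (∀ (X : Finset M) (B C : Set M), D.IndepF X B C ↔ D.Indep (D.cld (↑X ∪ B)) B C)

/-- Existence for `⫝^d`: any `A ∈ 𝒳` can be moved by an automorphism fixing `B`
pointwise to be independent from `C` over `B`. -/
def ExistenceP : Prop :=
  ∀ A B C : Set M, D.IsClX A → D.IsClX B → D.IsClX C →
    ∃ g : G, Fixes G g B ∧ D.Indep ((fun x => g • x) '' A) B C

/-- Stationarity for `⫝^d`: if `A₁, A₂ ∈ 𝒳` contain `B`, are independent from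
`C` over `B`, and a partial automorphism (the restriction of some `g ∈ G`)
maps `A₁` onto `A₂` fixing `B` pointwise, then it extends (together with the
identity on `C`) to an automorphism. -/
def StationarityP : Prop :=
  ∀ A₁ A₂ B C : Set M, D.IsClX A₁ → D.IsClX A₂ → D.IsClX B → D.IsClX C →
    B ⊆ A₁ → B ⊆ A₂ → D.Indep A₁ B C → D.Indep A₂ B C →
    ∀ g : G, Fixes G g B → (fun x => g • x) '' A₁ = A₂ →
      ∃ k : G, (∀ x ∈ A₁, k • x = g • x) ∧ Fixes G k C

/-- `b` is basic over `A ∈ 𝒳`. -/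
noncomputable def IsBasic (b : M) (A : Set M) : Prop :=
  b ∉ A ∧ ∀ C : Set M, D.IsClX C → A ⊆ C → D.drel {b} C < D.drel {b} A → b ∈ C

/-- `S` is a basic `Aut(M/A)`-orbit. -/
noncomputable def IsBasicOrbit (S A : Set M) : Prop :=
  ∃ b : M, D.IsBasic b A ∧ S = orbOver G b A

/-- `M` is monodimensional: for every `A ∈ 𝒳` and basic `Aut(M/A)`-orbit `S`
there is `A ⊆ B ∈ 𝒳` with `M = cl^d(B ∪ S)`. -/
noncomputable def Monodimensional : Prop :=
  ∀ A S : Set M, D.IsClX A → D.IsBasicOrbit S A →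
    ∃ B : Set M, D.IsClX B ∧ A ⊆ B ∧ D.cld (B ∪ S) = Set.univ

/-- `g` is bounded over `A ∈ 𝒳`: there are `A ⊆ C ∈ 𝒳` and `b` basic over `C`
such that every `b'` in the `Aut(M/C)`-orbit of `b` lies in `cl^d(C ∪ {g b'})`. -/
noncomputable def BoundedOver (g : G) (A : Set M) : Prop :=
  ∃ C : Set M, D.IsClX C ∧ A ⊆ C ∧
    ∃ b : M, D.IsBasic b C ∧ ∀ b' ∈ orbOver G b C, b' ∈ D.cld (C ∪ {g • b'})

/-- `g` is bounded: bounded over some `A ∈ 𝒳`. -/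
noncomputable def Bounded (g : G) : Prop :=
  ∃ A : Set M, D.IsClX A ∧ D.BoundedOver g A

/-- `g` is `cl^d`-bounded: some `E ∈ 𝒳` is such that `g` stabilises setwise
every `B ∈ 𝒳` containing `E`. -/
noncomputable def ClDBounded (g : G) : Prop :=
  ∃ E : Set M, D.IsClX E ∧
    ∀ B : Set M, D.IsClX B → E ⊆ B → (fun x => g • x) '' B = B

end DimFn

namespace DimFn

variable {M G : Type*} [DecidableEq M] [Group G] [MulAction G M] (D : DimFn M G)

lemma drelSet_nonempty (X : Finset M) (Z : Set M) :
    {k : ℤ | ∃ Y : Finset M, ↑Y ⊆ Z ∧ k = D.d (X ∪ Y) - D.d Y}.Nonempty :=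
  ⟨D.d (X ∪ ∅) - D.d ∅, ∅, by simp, rfl⟩

lemma drelSet_bddBelow (X : Finset M) (Z : Set M) :
    BddBelow {k : ℤ | ∃ Y : Finset M, ↑Y ⊆ Z ∧ k = D.d (X ∪ Y) - D.d Y} := by
  refine ⟨0, fun k hk => ?_⟩
  obtain ⟨Y, _, rfl⟩ := hk
  have := D.mono (Finset.subset_union_right (s₁ := X) (s₂ := Y))
  omega

lemma drel_nonneg (X : Finset M) (Z : Set M) : 0 ≤ D.drel X Z := by
  refine le_csInf (D.drelSet_nonempty X Z) fun k hk => ?_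
  obtain ⟨Y, _, rfl⟩ := hk
  have := D.mono (Finset.subset_union_right (s₁ := X) (s₂ := Y))
  omega

lemma drel_le {X Y : Finset M} {Z : Set M} (h : ↑Y ⊆ Z) :
    D.drel X Z ≤ D.d (X ∪ Y) - D.d Y :=
  csInf_le (D.drelSet_bddBelow X Z) ⟨Y, h, rfl⟩

lemma drel_exists (X : Finset M) (Z : Set M) :
    ∃ Y : Finset M, ↑Y ⊆ Z ∧ D.drel X Z = D.d (X ∪ Y) - D.d Y :=
  Int.csInf_mem (D.drelSet_nonempty X Z) (D.drelSet_bddBelow X Z)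

lemma drel_mono_right {X : Finset M} {Z Z' : Set M} (h : Z ⊆ Z') :
    D.drel X Z' ≤ D.drel X Z := by
  obtain ⟨Y, hY, hval⟩ := D.drel_exists X Z
  rw [hval]
  exact D.drel_le (hY.trans h)

/-- Submodularity: enlarging the base finset decreases the increment. -/
lemma diff_mono (X : Finset M) {Z Z' : Finset M} (h : Z ⊆ Z') :
    D.d (X ∪ Z') - D.d Z' ≤ D.d (X ∪ Z) - D.d Z := by
  have hsub := D.submodular (X ∪ Z) Z'
  have h1 : (X ∪ Z) ∪ Z' = X ∪ Z' := by
    ext a; simp only [Finset.mem_union]; tauto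
  have h2 : D.d Z ≤ D.d ((X ∪ Z) ∩ Z') :=
    D.mono (fun a ha => Finset.mem_inter.2
      ⟨Finset.mem_union_right _ ha, h ha⟩)
  rw [h1] at hsub
  omega

lemma drel_finset (X W : Finset M) : D.drel X ↑W = D.d (X ∪ W) - D.d W := by
  refine le_antisymm (D.drel_le subset_rfl) (le_csInf (D.drelSet_nonempty X ↑W) ?_)
  rintro k ⟨Y, hY, rfl⟩
  exact D.diff_mono X (by exact_mod_cast hY)

lemma subset_cld (Z : Set M) : Z ⊆ D.cld Z := by
  intro a ha
  have h1 : D.drel {a} Z ≤ D.d ({a} ∪ {a}) - D.d {a} := D.drel_le (by simpa using ha)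
  simp only [Finset.union_self] at h1
  have h2 := D.drel_nonneg {a} Z
  simp only [cld, Set.mem_setOf_eq]; omega

lemma d_union_of_cld {W Y : Finset M} (h : ↑Y ⊆ D.cld ↑W) :
    D.d (W ∪ Y) = D.d W := by
  classical
  induction Y using Finset.induction with
  | empty => simp
  | @insert a Y ha ih =>
    have haW : D.drel {a} ↑W = 0 := h (by simp)
    have hda : D.d ({a} ∪ W) = D.d W := by
      have := D.drel_finset {a} W
      omega
    have hY : ↑Y ⊆ D.cld ↑W := fun x hx => h (by simp [hx])
    have hWY := ih hY
    have hsub := D.submodular (W ∪ Y) ({a} ∪ W)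
    have h1 : (W ∪ Y) ∪ ({a} ∪ W) = W ∪ insert a Y := by
      ext x; simp only [Finset.mem_union, Finset.mem_insert, Finset.mem_singleton]; tauto
    have h2 : D.d W ≤ D.d ((W ∪ Y) ∩ ({a} ∪ W)) :=
      D.mono fun x hx => Finset.mem_inter.2
        ⟨Finset.mem_union_left _ hx, Finset.mem_union_right _ hx⟩
    rw [h1] at hsub
    have hge : D.d W ≤ D.d (W ∪ insert a Y) := D.mono (Finset.subset_union_left)
    omega

lemma drel_cld (X W : Finset M) : D.drel X (D.cld ↑W) = D.drel X ↑W := by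
  refine le_antisymm (D.drel_mono_right (D.subset_cld _)) ?_
  refine le_csInf (D.drelSet_nonempty X _) ?_
  rintro k ⟨Y, hY, rfl⟩
  have hWY := D.d_union_of_cld hY
  have hsub := D.submodular (X ∪ Y) (W ∪ Y)
  have h1 : (X ∪ Y) ∪ (W ∪ Y) = X ∪ W ∪ Y := by
    ext x; simp only [Finset.mem_union]; tauto
  have h2 : D.d Y ≤ D.d ((X ∪ Y) ∩ (W ∪ Y)) :=
    D.mono fun x hx => Finset.mem_inter.2
      ⟨Finset.mem_union_right _ hx, Finset.mem_union_right _ hx⟩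
  have h3 : D.d (X ∪ W) ≤ D.d (X ∪ W ∪ Y) := D.mono (Finset.subset_union_left)
  rw [h1] at hsub
  rw [D.drel_finset X W]
  omega

end DimFn

/-- Let `A ∈ 𝒳` and let `S` be a set of elements each basic
over `A`. Then `d`-closure over `A` restricted to `S` satisfies the exchange
property: if `c₁, c₂ ∈ S` and `c₁ ∈ cl^d(A ∪ {c₂}) \ A`, then
`c₂ ∈ cl^d(A ∪ {c₁})`. (Hence `cl^d(A ∪ ·)` gives a pregeometry on `S`.) -/
theorem basic_exchange {M G : Type*} [Countable M] [DecidableEq M]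
    [Group G] [MulAction G M] (D : DimFn M G)
    (A : Set M) (hA : D.IsClX A) (S : Set M) (hS : ∀ x ∈ S, D.IsBasic x A)
    (c₁ c₂ : M) (hc₁ : c₁ ∈ S) (hc₂ : c₂ ∈ S)
    (h : c₁ ∈ D.cld (A ∪ {c₂})) (h' : c₁ ∉ A) :
    c₂ ∈ D.cld (A ∪ {c₁}) := by
  classical
  obtain ⟨W, rfl⟩ := hA
  set A := D.cld ↑W with hAdef
  -- `t₁ = d(c₁/A) > 0`
  have ht₁pos : 0 < D.drel {c₁} A := by
    have h0 := D.drel_nonneg {c₁} A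
    rcases h0.lt_or_eq with h0 | h0
    · exact h0
    · exfalso
      apply h'
      have : D.drel {c₁} ↑W = 0 := by rw [← D.drel_cld, ← hAdef]; omega
      exact this
  -- witness for `d(c₁ / A c₂) = 0`
  have hdc₁ : D.drel {c₁} (A ∪ {c₂}) = 0 := h
  obtain ⟨Y, hYsub, hYval⟩ := D.drel_exists {c₁} (A ∪ {c₂})
  rw [hdc₁] at hYval
  set Y₀ : Finset M := Y.erase c₂ with hY₀def
  have hY₀A : ↑Y₀ ⊆ A := by
    intro x hx
    simp only [hY₀def, Finset.coe_erase, Set.mem_diff, Finset.mem_coe,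
      Set.mem_singleton_iff] at hx
    rcases hYsub hx.1 with hxA | hxc
    · exact hxA
    · exact absurd hxc hx.2
  have hY₂eq : insert c₂ Y₀ = insert c₂ Y := by
    ext x; simp only [hY₀def, Finset.mem_insert, Finset.mem_erase]; tauto
  -- (*) : d({c₁,c₂} ∪ Y₀) = d({c₂} ∪ Y₀)
  have hstar : D.d ({c₁} ∪ insert c₂ Y₀) = D.d (insert c₂ Y₀) := by
    have hsub := D.submodular ({c₁} ∪ Y) (insert c₂ Y)
    have h1 : ({c₁} ∪ Y) ∪ insert c₂ Y = {c₁} ∪ insert c₂ Y := by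
      ext x; simp only [Finset.mem_union, Finset.mem_insert, Finset.mem_singleton]; tauto
    have h2 : D.d Y ≤ D.d (({c₁} ∪ Y) ∩ insert c₂ Y) :=
      D.mono fun x hx => Finset.mem_inter.2
        ⟨Finset.mem_union_right _ hx, Finset.mem_insert_of_mem hx⟩
    rw [h1] at hsub
    have hge : D.d (insert c₂ Y) ≤ D.d ({c₁} ∪ insert c₂ Y) :=
      D.mono Finset.subset_union_right
    rw [hY₂eq]
    omega
  -- witness `Z₁` for `t₂ = d(c₂/A)`; enlarge to `Z = Z₁ ∪ Y₀`
  obtain ⟨Z₁, hZ₁sub, hZ₁val⟩ := D.drel_exists {c₂} A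
  set Z : Finset M := Z₁ ∪ Y₀ with hZdef
  have hZA : ↑Z ⊆ A := by
    intro x hx
    simp only [hZdef, Finset.coe_union, Set.mem_union, Finset.mem_coe] at hx
    rcases hx with hx | hx
    · exact hZ₁sub hx
    · exact hY₀A hx
  have hZ2 : D.d ({c₂} ∪ Z) - D.d Z = D.drel {c₂} A := by
    have hle : D.d ({c₂} ∪ Z) - D.d Z ≤ D.d ({c₂} ∪ Z₁) - D.d Z₁ :=
      D.diff_mono {c₂} (Finset.subset_union_left)
    have hge : D.drel {c₂} A ≤ D.d ({c₂} ∪ Z) - D.d Z := D.drel_le hZA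
    omega
  have hZ1 : D.drel {c₁} A ≤ D.d ({c₁} ∪ Z) - D.d Z := D.drel_le hZA
  -- d({c₁,c₂} ∪ Z) ≤ d({c₂} ∪ Z)
  have hkey : D.d ({c₁} ∪ insert c₂ Z) ≤ D.d (insert c₂ Z) := by
    have hsub := D.submodular ({c₁} ∪ insert c₂ Y₀) (insert c₂ Z)
    have h1 : ({c₁} ∪ insert c₂ Y₀) ∪ insert c₂ Z = {c₁} ∪ insert c₂ Z := by
      ext x
      simp only [Finset.mem_union, Finset.mem_insert, Finset.mem_singleton, hZdef]
      tauto
    have h2 : D.d (insert c₂ Y₀) ≤ D.d (({c₁} ∪ insert c₂ Y₀) ∩ insert c₂ Z) := by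
      refine D.mono fun x hx => Finset.mem_inter.2
        ⟨Finset.mem_union_right _ hx, ?_⟩
      rcases Finset.mem_insert.1 hx with h | h
      · simp [h]
      · exact Finset.mem_insert_of_mem (Finset.mem_union_right _ h)
    rw [h1] at hsub
    omega
  -- d(c₂ / A c₁) ≤ t₂ - t₁ < t₂
  have hmain : D.drel {c₂} (A ∪ {c₁}) ≤ D.drel {c₂} A - D.drel {c₁} A := by
    have hwit : ↑({c₁} ∪ Z : Finset M) ⊆ A ∪ {c₁} := by
      intro x hx
      simp only [Finset.coe_union, Set.mem_union, Finset.coe_singleton,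
        Set.mem_singleton_iff, Finset.mem_coe] at hx ⊢
      rcases hx with hx | hx
      · exact Or.inr hx
      · exact Or.inl (hZA hx)
    have hle : D.drel {c₂} (A ∪ {c₁}) ≤ D.d ({c₂} ∪ ({c₁} ∪ Z)) - D.d ({c₁} ∪ Z) :=
      D.drel_le hwit
    have heq : {c₂} ∪ ({c₁} ∪ Z) = {c₁} ∪ insert c₂ Z := by
      ext x; simp only [Finset.mem_union, Finset.mem_insert, Finset.mem_singleton]; tauto
    have heq2 : ({c₂} : Finset M) ∪ Z = insert c₂ Z := by ext x; simp
    rw [heq] at hle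
    rw [heq2] at hZ2
    omega
  -- the closure `C = cl^d(W ∪ {c₁})` witnesses basicness of `c₂`
  set C : Set M := D.cld ↑(insert c₁ W) with hCdef
  have hAC : A ⊆ C := by
    intro a ha
    have ha0 : D.drel {a} ↑W = 0 := by rw [hAdef] at ha; exact ha
    have hle : D.drel {a} ↑(insert c₁ W) ≤ D.drel {a} ↑W :=
      D.drel_mono_right (Finset.coe_subset.2 (Finset.subset_insert _ _))
    have hge := D.drel_nonneg {a} ↑(insert c₁ W)
    have : D.drel {a} ↑(insert c₁ W) = 0 := le_antisymm (by omega) hge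
    exact this
  have hAc₁C : A ∪ {c₁} ⊆ C := by
    intro x hx
    rcases hx with hx | hx
    · exact hAC hx
    · rw [Set.mem_singleton_iff] at hx
      subst hx
      exact D.subset_cld _ (by simp)
  have hCless : D.drel {c₂} C < D.drel {c₂} A := by
    have h1 : D.drel {c₂} C ≤ D.drel {c₂} (A ∪ {c₁}) := D.drel_mono_right hAc₁C
    omega
  -- apply basicness of `c₂`
  have hc₂C : c₂ ∈ C :=
    (hS c₂ hc₂).2 C ⟨insert c₁ W, rfl⟩ hAC hCless
  -- conclude
  have hfin : D.drel {c₂} ↑(insert c₁ W) = 0 := by rw [hCdef] at hc₂C; exact hc₂C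
  have hsubfin : (↑(insert c₁ W) : Set M) ⊆ A ∪ {c₁} := by
    intro x hx
    simp only [Finset.coe_insert, Set.mem_insert_iff] at hx
    rcases hx with hx | hx
    · exact Or.inr (by simp [hx])
    · exact Or.inl (D.subset_cld _ hx)
  have h1 : D.drel {c₂} (A ∪ {c₁}) ≤ 0 := hfin ▸ D.drel_mono_right hsubfin
  have h2 := D.drel_nonneg {c₂} (A ∪ {c₁})
  show D.drel {c₂} (A ∪ {c₁}) = 0
  omega
end

section
/- Suppose ⫝ is a stationary independence relation on M compatible with an invariant finitary closure cl that subsumes definable closure, and Aut(M) fixes cl(∅) pointwise. Then the joint embedding property holds for partial automorphisms: if h_i : X_i → Y_i (i = 1, 2) are partial automorphisms with domains and ranges in X, there are f ∈ Aut(M) and a partial automorphism h with f^{-1} h_1 f ⊆ h and h_2 ⊆ h. -/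
/-- Suppose `⫝` is a stationary independence relation on `M`
compatible with an invariant finitary closure `cl` that subsumes definable
closure, and `Aut(M)` (modelled by the group `G` acting on `M`) fixes `cl(∅)`
pointwise. Then the joint embedding property holds for partial automorphisms:
if `hᵢ : Xᵢ → Yᵢ` (`i = 1, 2`) are partial automorphisms — i.e. restrictions of
automorphisms `gᵢ` to members `Xᵢ` of `𝒳 = {cl(X) : X finite}`, with images
`Yᵢ = gᵢ(Xᵢ)` — then there are `f ∈ Aut(M)` and a partial automorphism `h`
(extending to some `k ∈ Aut(M)`) with `f⁻¹ h₁ f ⊆ h` and `h₂ ⊆ h`. -/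
theorem partial_automorphism_jep {M G : Type*} [Countable M]
    [Group G] [MulAction G M]
    (cl : Set M → Set M)
    (clExt : ∀ Z : Set M, Z ⊆ cl Z)
    (clMono : ∀ Z W : Set M, Z ⊆ W → cl Z ⊆ cl W)
    (clIdem : ∀ Z : Set M, cl (cl Z) = cl Z)
    (clInv : ∀ (g : G) (Z : Set M), cl ((fun x => g • x) '' Z) = (fun x => g • x) '' cl Z)
    (clFin : ∀ Z : Set M, cl Z = ⋃ (Y : Finset M) (_ : ↑Y ⊆ Z), cl ↑Y)
    (clDcl : ∀ (X : Finset M) (a : M),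
      (∀ g : G, (∀ x ∈ cl ↑X, g • x = x) → g • a = a) → a ∈ cl ↑X)
    (Indep : Set M → Set M → Set M → Prop)
    (hInv : ∀ (g : G) (A B C : Set M), Indep A B C →
      Indep ((fun x => g • x) '' A) ((fun x => g • x) '' B) ((fun x => g • x) '' C))
    (hMono : ∀ A B C D : Set M, Indep A B (C ∪ D) → Indep A B C ∧ Indep A (B ∪ C) D)
    (hTrans : ∀ A B C D : Set M, Indep A B C → Indep A (B ∪ C) D → Indep A B (C ∪ D))
    (hSym : ∀ A B C : Set M, Indep A B C → Indep C B A)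
    (hCompatCl : ∀ A B C : Set M, Indep A B C ↔ Indep A (cl B) C)
    (hCompat : ∀ A B C : Set M, Indep A B C ↔ Indep (cl (A ∪ B)) B C)
    (hEx : ∀ A B C : Set M, (∃ X : Finset M, A = cl ↑X) → (∃ X : Finset M, B = cl ↑X) →
      (∃ X : Finset M, C = cl ↑X) →
      ∃ g : G, (∀ x ∈ B, g • x = x) ∧ Indep ((fun x => g • x) '' A) B C)
    (hStat : ∀ A₁ A₂ B C : Set M, (∃ X : Finset M, A₁ = cl ↑X) →
      (∃ X : Finset M, A₂ = cl ↑X) → (∃ X : Finset M, B = cl ↑X) →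
      (∃ X : Finset M, C = cl ↑X) → B ⊆ A₁ → B ⊆ A₂ →
      Indep A₁ B C → Indep A₂ B C →
      ∀ g : G, (∀ x ∈ B, g • x = x) → (fun x => g • x) '' A₁ = A₂ →
        ∃ k : G, (∀ x ∈ A₁, k • x = g • x) ∧ ∀ x ∈ C, k • x = x)
    (hFixClEmpty : ∀ g : G, ∀ x ∈ cl (∅ : Set M), g • x = x)
    (X₁ X₂ : Set M)
    (hX₁ : ∃ X : Finset M, X₁ = cl ↑X) (hX₂ : ∃ X : Finset M, X₂ = cl ↑X)
    (g₁ g₂ : G) :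
    ∃ f k : G, (∀ x ∈ X₁, k • (f⁻¹ • x) = f⁻¹ • (g₁ • x)) ∧
      (∀ x ∈ X₂, k • x = g₂ • x) := by
  classical
  obtain ⟨XF₁, hXF₁⟩ := hX₁
  obtain ⟨XF₂, hXF₂⟩ := hX₂
  -- helper: shrink the left argument of Indep
  have shrink : ∀ A A' B C : Set M, A' ⊆ A → Indep A B C → Indep A' B C := by
    intro A A' B C hsub h
    have h' : Indep C B (A' ∪ A) := by
      rw [Set.union_eq_self_of_subset_left hsub]; exact hSym _ _ _ h
    exact hSym _ _ _ (hMono C B A' A h').1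
  -- helper: composing images of scalar actions
  have imcomp : ∀ (a b : G) (Z : Set M),
      (fun x => a • x) '' ((fun x => b • x) '' Z) = (fun x => (a * b) • x) '' Z := by
    intro a b Z
    rw [Set.image_image]
    simp [mul_smul]
  set S₁ : Finset M := XF₁ ∪ XF₁.image (fun x => g₁ • x) with hS₁
  set S₂ : Finset M := XF₂ ∪ XF₂.image (fun x => g₂ • x) with hS₂
  have hclempty : (∃ X : Finset M, cl (∅ : Set M) = cl ↑X) := ⟨∅, by simp⟩
  obtain ⟨g, -, hIndep⟩ := hEx (cl ↑S₁) (cl (∅ : Set M)) (cl ↑S₂) ⟨S₁, rfl⟩ hclempty ⟨S₂, rfl⟩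
  -- the shifted copy of the first pair
  set A' : Set M := cl ((fun x => g • x) '' ↑S₁) with hA'def
  have hA'im : A' = (fun x => g • x) '' cl ↑S₁ := clInv g ↑S₁
  have hIndepA' : Indep A' (cl ∅) (cl ↑S₂) := by rw [hA'im]; exact hIndep
  have hA'fin : ∃ X : Finset M, A' = cl ↑X :=
    ⟨S₁.image (fun x => g • x), by rw [hA'def, Finset.coe_image]⟩
  -- pieces of the shifted first pair
  set A₁ : Set M := cl ((fun x => g • x) '' ↑XF₁) with hA₁def
  set A₂ : Set M := cl ((fun x => (g * g₁) • x) '' ↑XF₁) with hA₂def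
  have hsub₁ : A₁ ⊆ A' := by
    apply clMono
    exact Set.image_mono (by simp [hS₁, Finset.coe_union])
  have hsub₂ : A₂ ⊆ A' := by
    apply clMono
    intro y hy
    obtain ⟨x, hx, rfl⟩ := hy
    refine ⟨g₁ • x, ?_, by simp [mul_smul]⟩
    simp only [hS₁, Finset.coe_union, Finset.coe_image]
    exact Or.inr ⟨x, hx, rfl⟩
  -- pieces of the second pair
  set B₁ : Set M := cl (↑XF₂ : Set M) with hB₁def
  set B₂ : Set M := cl ((fun x => g₂ • x) '' ↑XF₂) with hB₂def
  have hsubB₁ : B₁ ⊆ cl ↑S₂ := clMono _ _ (by simp [hS₂, Finset.coe_union])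
  have hsubB₂ : B₂ ⊆ cl ↑S₂ := by
    apply clMono
    simp only [hS₂, Finset.coe_union, Finset.coe_image]
    intro y hy; exact Or.inr hy
  -- independence facts
  have hIndS₂A' : Indep (cl ↑S₂) (cl ∅) A' := hSym _ _ _ hIndepA'
  have hIA₁ : Indep A₁ (cl ∅) (cl ↑S₂) := shrink _ _ _ _ hsub₁ hIndepA'
  have hIA₂ : Indep A₂ (cl ∅) (cl ↑S₂) := shrink _ _ _ _ hsub₂ hIndepA'
  have hIB₁ : Indep B₁ (cl ∅) A' := shrink _ _ _ _ hsubB₁ hIndS₂A'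
  have hIB₂ : Indep B₂ (cl ∅) A' := shrink _ _ _ _ hsubB₂ hIndS₂A'
  have hclemptysub : ∀ Z : Set M, cl (∅ : Set M) ⊆ cl Z := fun Z =>
    clMono _ _ (Set.empty_subset Z)
  -- stationarity for the shifted first pair: witness k₁
  obtain ⟨k₁, hk₁, hk₁fix⟩ := hStat A₁ A₂ (cl ∅) (cl ↑S₂)
    ⟨XF₁.image (fun x => g • x), by rw [hA₁def, Finset.coe_image]⟩
    ⟨XF₁.image (fun x => (g * g₁) • x), by rw [hA₂def, Finset.coe_image]⟩
    hclempty ⟨S₂, rfl⟩ (hclemptysub _) (hclemptysub _) hIA₁ hIA₂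
    (g * g₁ * g⁻¹) (hFixClEmpty _)
    (by
      rw [hA₁def, ← clInv, imcomp]
      congr 2
      group)
  -- stationarity for the second pair: witness k₂
  obtain ⟨k₂, hk₂, hk₂fix⟩ := hStat B₁ B₂ (cl ∅) A'
    ⟨XF₂, rfl⟩ ⟨XF₂.image (fun x => g₂ • x), by rw [hB₂def, Finset.coe_image]⟩
    hclempty hA'fin (hclemptysub _) (hclemptysub _) hIB₁ hIB₂
    g₂ (hFixClEmpty _) (by rw [hB₁def, ← clInv])
  refine ⟨g⁻¹, k₁ * k₂, ?_, ?_⟩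
  · intro x hx
    have hgx : g • x ∈ A₁ := by
      rw [hA₁def, clInv]
      exact ⟨x, by rwa [hXF₁] at hx, rfl⟩
    have h1 : k₂ • (g • x) = g • x := hk₂fix _ (hsub₁ hgx)
    have h2 : k₁ • (g • x) = (g * g₁ * g⁻¹) • (g • x) := hk₁ _ hgx
    simp only [inv_inv, mul_smul, h1, h2]
    simp [← mul_smul]
  · intro x hx
    have hx' : x ∈ B₁ := by rwa [hXF₂] at hx
    have hgx : g₂ • x ∈ cl ↑S₂ := by
      apply hsubB₂
      rw [hB₂def, clInv]
      exact ⟨x, hx', rfl⟩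
    rw [mul_smul, hk₂ _ hx', hk₁fix _ hgx]
end
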